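/- arXiv:2310.09360 — 2 statements merged into one kernel-verified Lean document; each statement's English description precedes it below -/
import Mathlib

section
/- For every x ∈ ∂D, the tangent cone satisfies T_D(x) = ∪_{S ∈ S(x)} [ (∩_{(i,j) ∈ T(x), j ∈ S_i} {z ∈ ℝ^n : (W̄_{i-1}(S) W_{ij})·z ≥ 0}) ∩ (∩_{(i,j) ∈ T(x), j ∉ S_i} {z ∈ ℝ^n : (W̄_{i-1}(S) W_{ij})·z ≤ 0}) ∩ {z ∈ ℝ^n : W̄(S)·z ≥ 0} ], with the convention that W̄_0(S) is the n × n identity matrix. -/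
/-- A feedforward ReLU network with `L` layers. `d 0` is the input dimension `n`;
`d i` is the width `M_i` of layer `i` for `1 ≤ i ≤ L`. `W i j : Fin (d i) → ℝ` is the
weight vector of neuron `j` in layer `i+1` (paper layer `i+1`), `r i j` its bias,
`Ω` the output weights and `ψ` the output bias. -/
structure ReluNet where
  L : ℕ
  hL : 1 ≤ L
  d : ℕ → ℕ
  W : (i : ℕ) → Fin (d (i + 1)) → Fin (d i) → ℝ
  r : (i : ℕ) → Fin (d (i + 1)) → ℝ
  Ω : Fin (d L) → ℝ
  ψ : ℝ

namespace ReluNet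

open Classical

/-- Layer outputs: `z N i x` is the output vector of paper layer `i` (`z N 0 x = x`). -/
def z (N : ReluNet) : (i : ℕ) → (Fin (N.d 0) → ℝ) → Fin (N.d i) → ℝ
  | 0, x => x
  | i + 1, x => fun j => max 0 ((∑ k, N.W i j k * z N i x k) + N.r i j)

/-- Pre-activation input of neuron `(i+1, j)` (paper indexing) at input `x`. -/
def pre (N : ReluNet) (i : ℕ) (j : Fin (N.d (i + 1))) (x : Fin (N.d 0) → ℝ) : ℝ :=
  (∑ k, N.W i j k * N.z i x k) + N.r i j

/-- The network output `b(x) = Ω ⬝ z_L(x) + ψ`. -/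
def b (N : ReluNet) (x : Fin (N.d 0) → ℝ) : ℝ :=
  (∑ j, N.Ω j * N.z N.L x j) + N.ψ

/-- An activation set: a set of neurons in each layer (`S i` lives in paper layer `i+1`). -/
abbrev ActSet (N : ReluNet) := (i : ℕ) → Set (Fin (N.d (i + 1)))

/-- The activation region `X̄(S)`: inputs whose pre-activation at neuron `(i,j)` is `≥ 0`
for `j ∈ S_i` and `≤ 0` for `j ∉ S_i`. -/
def region (N : ReluNet) (S : N.ActSet) : Set (Fin (N.d 0) → ℝ) :=
  {x | ∀ i < N.L, ∀ j : Fin (N.d (i + 1)),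
      (j ∈ S i → 0 ≤ N.pre i j x) ∧ (j ∉ S i → N.pre i j x ≤ 0)}

/-- `Wbar N S i j` is the column `W̄_{ij}(S) ∈ ℝ^n` (paper layer `i`); `Wbar N S 0` is the
identity matrix convention `W̄_0(S) = I`. -/
noncomputable def Wbar (N : ReluNet) (S : N.ActSet) : (i : ℕ) → Fin (N.d i) → Fin (N.d 0) → ℝ
  | 0, j => fun k => if k = j then 1 else 0
  | i + 1, j =>
      if j ∈ S i then (fun k => ∑ j', N.W i j j' * Wbar N S i j' k) else 0

/-- `rbar N S i j` is `r̄_{ij}(S)` (paper layer `i`); `rbar N S 0 = 0` by convention. -/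
noncomputable def rbar (N : ReluNet) (S : N.ActSet) : (i : ℕ) → Fin (N.d i) → ℝ
  | 0, _ => 0
  | i + 1, j =>
      if j ∈ S i then (∑ j', N.W i j j' * rbar N S i j') + N.r i j else 0

/-- `W̄(S) = W̄_L(S) Ω ∈ ℝ^n`. -/
noncomputable def WbarOut (N : ReluNet) (S : N.ActSet) : Fin (N.d 0) → ℝ :=
  fun k => ∑ j, N.Ω j * N.Wbar S N.L j k

/-- `r̄(S) = Ω ⬝ r̄_L(S) + ψ`. -/
noncomputable def rbarOut (N : ReluNet) (S : N.ActSet) : ℝ :=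
  (∑ j, N.Ω j * N.rbar S N.L j) + N.ψ

/-- `gradW N S i j = W̄_i(S) W_{(i+1)j} ∈ ℝ^n` (paper: `W̄_{i-1}(S) W_{ij}` for neuron
`(i,j)` with `i = ` my `i+1`). -/
noncomputable def gradW (N : ReluNet) (S : N.ActSet) (i : ℕ) (j : Fin (N.d (i + 1))) :
    Fin (N.d 0) → ℝ :=
  fun k => ∑ j', N.W i j j' * N.Wbar S i j' k

end ReluNet

/-- Euclidean distance from a point to a set in `ℝ^n` (it is `0` for the empty set,
matching the convention of `Metric.infDist`). -/
noncomputable def eInfDist {n : ℕ} (x : Fin n → ℝ) (A : Set (Fin n → ℝ)) : ℝ :=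
  sInf ((fun y => Real.sqrt (∑ k, (x k - y k) ^ 2)) '' A)

/-- The tangent cone `T_A(x) = {z : liminf_{τ→0⁺} dist(x + τz, A)/τ = 0}`, with `dist`
the Euclidean distance from a point to a set. -/
noncomputable def tangentCone {n : ℕ} (A : Set (Fin n → ℝ)) (x : Fin n → ℝ) :
    Set (Fin n → ℝ) :=
  {z | Filter.liminf (fun τ : ℝ => eInfDist (x + τ • z) A / τ)
        (nhdsWithin 0 (Set.Ioi 0)) = 0}
namespace ReluNet

lemma continuous_z (N : ReluNet) (i : ℕ) : Continuous (fun x => N.z i x) := by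
  induction i with
  | zero => exact continuous_id
  | succ i ih =>
    apply continuous_pi
    intro j
    apply continuous_const.max
    apply Continuous.add _ continuous_const
    exact continuous_finset_sum _ fun k _ =>
      continuous_const.mul ((continuous_apply k).comp ih)

lemma continuous_pre (N : ReluNet) (i : ℕ) (j : Fin (N.d (i+1))) :
    Continuous (fun x => N.pre i j x) := by
  unfold pre
  apply Continuous.add _ continuous_const
  exact continuous_finset_sum _ fun k _ =>
    continuous_const.mul ((continuous_apply k).comp (N.continuous_z i))

lemma continuous_b (N : ReluNet) : Continuous N.b := by
  unfold b
  apply Continuous.add _ continuous_const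
  exact continuous_finset_sum _ fun k _ =>
    continuous_const.mul ((continuous_apply k).comp (N.continuous_z N.L))

/-- On (a superset of) the activation region, the layer outputs are affine. -/
lemma z_linear (N : ReluNet) (S : N.ActSet) (x : Fin (N.d 0) → ℝ) :
    ∀ i, (∀ i' < i, ∀ j : Fin (N.d (i' + 1)),
        (j ∈ S i' → 0 ≤ N.pre i' j x) ∧ (j ∉ S i' → N.pre i' j x ≤ 0)) →
      ∀ j, N.z i x j = (∑ k, N.Wbar S i j k * x k) + N.rbar S i j := by
  intro i
  induction i with
  | zero =>
    intro _ j
    simp [z, Wbar, rbar]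
  | succ i ih =>
    intro h j
    have hz := ih (fun i' hi' => h i' (Nat.lt_succ_of_lt hi'))
    have hpre := h i (Nat.lt_succ_self i) j
    show max 0 ((∑ k, N.W i j k * N.z i x k) + N.r i j) = _
    by_cases hj : j ∈ S i
    · have h0 : 0 ≤ N.pre i j x := hpre.1 hj
      have hpe : N.pre i j x = (∑ k, N.W i j k * N.z i x k) + N.r i j := rfl
      rw [max_eq_right (hpe ▸ h0)]
      simp only [Wbar, rbar, if_pos hj]
      have : ∀ k, N.W i j k * N.z i x k
          = (∑ k', N.W i j k * (N.Wbar S i k k' * x k')) + N.W i j k * N.rbar S i k := by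
        intro k
        rw [hz k, mul_add, Finset.mul_sum]
      rw [Finset.sum_congr rfl (fun k _ => this k), Finset.sum_add_distrib]
      rw [Finset.sum_comm]
      simp only [Finset.sum_mul, mul_assoc]
      ring
    · have h0 : N.pre i j x ≤ 0 := hpre.2 hj
      have hpe : N.pre i j x = (∑ k, N.W i j k * N.z i x k) + N.r i j := rfl
      rw [max_eq_left (hpe ▸ h0)]
      simp [Wbar, rbar, if_neg hj]

lemma pre_linear (N : ReluNet) (S : N.ActSet) (x : Fin (N.d 0) → ℝ) (i : ℕ)
    (h : ∀ i' < i, ∀ j : Fin (N.d (i' + 1)),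
        (j ∈ S i' → 0 ≤ N.pre i' j x) ∧ (j ∉ S i' → N.pre i' j x ≤ 0))
    (j : Fin (N.d (i+1))) :
    N.pre i j x = (∑ k, N.gradW S i j k * x k)
      + ((∑ j', N.W i j j' * N.rbar S i j') + N.r i j) := by
  unfold pre gradW
  rw [Finset.sum_congr rfl (fun k _ => by rw [N.z_linear S x i h k, mul_add, Finset.mul_sum])]
  rw [Finset.sum_add_distrib, Finset.sum_comm]
  simp only [Finset.sum_mul, mul_assoc]
  ring

lemma b_linear (N : ReluNet) (S : N.ActSet) (x : Fin (N.d 0) → ℝ) (hx : x ∈ N.region S) :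
    N.b x = (∑ k, N.WbarOut S k * x k) + N.rbarOut S := by
  unfold b WbarOut rbarOut
  have h : ∀ i' < N.L, ∀ j : Fin (N.d (i' + 1)),
      (j ∈ S i' → 0 ≤ N.pre i' j x) ∧ (j ∉ S i' → N.pre i' j x ≤ 0) := hx
  rw [Finset.sum_congr rfl (fun k _ => by rw [N.z_linear S x N.L h k, mul_add, Finset.mul_sum])]
  rw [Finset.sum_add_distrib, Finset.sum_comm]
  simp only [Finset.sum_mul, mul_assoc]
  ring

lemma isClosed_region (N : ReluNet) (S : N.ActSet) : IsClosed (N.region S) := by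
  have : N.region S = ⋂ i, ⋂ (_ : i < N.L), ⋂ j,
      {x | (j ∈ S i → 0 ≤ N.pre i j x) ∧ (j ∉ S i → N.pre i j x ≤ 0)} := by
    ext x; simp [region]
  rw [this]
  refine isClosed_iInter fun i => isClosed_iInter fun _ => isClosed_iInter fun j => ?_
  by_cases hj : j ∈ S i
  · have : {x | (j ∈ S i → 0 ≤ N.pre i j x) ∧ (j ∉ S i → N.pre i j x ≤ 0)}
        = {x | 0 ≤ N.pre i j x} := by ext x; simp [hj]
    rw [this]; exact isClosed_le continuous_const (N.continuous_pre i j)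
  · have : {x | (j ∈ S i → 0 ≤ N.pre i j x) ∧ (j ∉ S i → N.pre i j x ≤ 0)}
        = {x | N.pre i j x ≤ 0} := by ext x; simp [hj]
    rw [this]; exact isClosed_le (N.continuous_pre i j) continuous_const

end ReluNet

lemma eInfDist_nonneg {n : ℕ} (x : Fin n → ℝ) (A : Set (Fin n → ℝ)) (hA : A.Nonempty) :
    0 ≤ eInfDist x A :=
  le_csInf (hA.image _) (by rintro _ ⟨y, _, rfl⟩; exact Real.sqrt_nonneg _)

lemma eInfDist_eq_zero_of_mem {n : ℕ} (x : Fin n → ℝ) (A : Set (Fin n → ℝ)) (h : x ∈ A) :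
    eInfDist x A = 0 := by
  refine le_antisymm ?_ (eInfDist_nonneg x A ⟨x, h⟩)
  refine csInf_le ⟨0, by rintro _ ⟨y, _, rfl⟩; exact Real.sqrt_nonneg _⟩ ⟨x, h, by simp⟩

lemma eInfDist_exists_near {n : ℕ} (x : Fin n → ℝ) (A : Set (Fin n → ℝ)) (hA : A.Nonempty)
    {c : ℝ} (h : eInfDist x A < c) :
    ∃ y ∈ A, Real.sqrt (∑ k, (x k - y k) ^ 2) < c := by
  obtain ⟨_, ⟨y, hy, rfl⟩, hlt⟩ := exists_lt_of_csInf_lt (hA.image _) h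
  exact ⟨y, hy, hlt⟩

lemma eInfDist_le {n : ℕ} (x : Fin n → ℝ) (A : Set (Fin n → ℝ)) {y : Fin n → ℝ} (hy : y ∈ A) :
    eInfDist x A ≤ Real.sqrt (∑ k, (x k - y k) ^ 2) :=
  csInf_le ⟨0, by rintro _ ⟨w, _, rfl⟩; exact Real.sqrt_nonneg _⟩ ⟨y, hy, rfl⟩

lemma coord_le_sqrt {n : ℕ} (v : Fin n → ℝ) (k : Fin n) :
    |v k| ≤ Real.sqrt (∑ k, (v k) ^ 2) := by
  rw [← Real.sqrt_sq_eq_abs]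
  apply Real.sqrt_le_sqrt
  exact Finset.single_le_sum (fun k _ => sq_nonneg (v k)) (Finset.mem_univ k)

open ReluNet in
lemma b_eq_zero_of_frontier (N : ReluNet) (x : Fin (N.d 0) → ℝ)
    (hx : x ∈ frontier {y : Fin (N.d 0) → ℝ | 0 ≤ N.b y}) : N.b x = 0 := by
  have hcl : IsClosed {y : Fin (N.d 0) → ℝ | 0 ≤ N.b y} :=
    isClosed_le continuous_const N.continuous_b
  have h1 : 0 ≤ N.b x := by
    have := hx.1
    rwa [hcl.closure_eq] at this
  by_contra hne
  have hpos : 0 < N.b x := lt_of_le_of_ne h1 (Ne.symm hne)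
  have hopen : IsOpen {y : Fin (N.d 0) → ℝ | 0 < N.b y} :=
    isOpen_lt continuous_const N.continuous_b
  have hsub : {y : Fin (N.d 0) → ℝ | 0 < N.b y} ⊆ interior {y : Fin (N.d 0) → ℝ | 0 ≤ N.b y} := by
    rw [← hopen.interior_eq]
    exact interior_mono (fun y (hy : 0 < N.b y) => le_of_lt hy)
  exact hx.2 (hsub hpos)

open ReluNet in
lemma mem_region_pattern (N : ReluNet) (y : Fin (N.d 0) → ℝ) :
    y ∈ N.region (fun i => {j | 0 ≤ N.pre i j y}) := by
  intro i _ j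
  constructor
  · exact fun h => h
  · intro h
    exact le_of_not_ge h

namespace ReluNet

/-- Along an admissible direction, the activation pattern is preserved for small `τ`. -/
lemma ray (N : ReluNet) (S : N.ActSet) (x z : Fin (N.d 0) → ℝ) (hx : x ∈ N.region S)
    (h1 : ∀ i < N.L, ∀ j : Fin (N.d (i+1)), N.pre i j x = 0 → j ∈ S i →
        0 ≤ ∑ k, N.gradW S i j k * z k)
    (h2 : ∀ i < N.L, ∀ j : Fin (N.d (i+1)), N.pre i j x = 0 → j ∉ S i →
        (∑ k, N.gradW S i j k * z k) ≤ 0) :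
    ∀ m ≤ N.L, ∃ τ0 > 0, ∀ τ ∈ Set.Icc (0:ℝ) τ0, ∀ i < m, ∀ j : Fin (N.d (i+1)),
      (j ∈ S i → 0 ≤ N.pre i j (x + τ • z)) ∧ (j ∉ S i → N.pre i j (x + τ • z) ≤ 0) := by
  intro m
  induction m with
  | zero => exact fun _ => ⟨1, one_pos, fun τ _ i hi => absurd hi (Nat.not_lt_zero i)⟩
  | succ m ih =>
    intro hm
    have hmL : m < N.L := hm
    obtain ⟨τ1, hτ1pos, hτ1⟩ := ih (le_of_lt hmL)
    -- per-neuron threshold for layer m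
    set g : Fin (N.d (m+1)) → ℝ := fun j => ∑ k, N.gradW S m j k * z k with hg
    set F : Fin (N.d (m+1)) → ℝ := fun j =>
      if N.pre m j x = 0 then 1 else |N.pre m j x| / (|g j| + 1) with hF
    have hFpos : ∀ j, 0 < F j := by
      intro j
      simp only [hF]
      split
      · exact one_pos
      · next h => exact div_pos (abs_pos.mpr h) (by positivity)
    set s : Finset ℝ := insert τ1 (Finset.univ.image F) with hs
    have hsne : s.Nonempty := ⟨τ1, Finset.mem_insert_self _ _⟩
    set τ0 : ℝ := s.min' hsne with hτ0
    have hτ0pos : 0 < τ0 := by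
      rw [hτ0, Finset.lt_min'_iff]
      intro y hy
      rcases Finset.mem_insert.mp hy with h | h
      · exact h ▸ hτ1pos
      · obtain ⟨j, _, rfl⟩ := Finset.mem_image.mp h
        exact hFpos j
    have hτ0le1 : τ0 ≤ τ1 := Finset.min'_le _ _ (Finset.mem_insert_self _ _)
    have hτ0leF : ∀ j, τ0 ≤ F j := fun j =>
      Finset.min'_le _ _ (Finset.mem_insert_of_mem (Finset.mem_image_of_mem F (Finset.mem_univ j)))
    refine ⟨τ0, hτ0pos, fun τ hτ i hi j => ?_⟩
    have hτ1mem : τ ∈ Set.Icc (0:ℝ) τ1 := ⟨hτ.1, le_trans hτ.2 hτ0le1⟩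
    rcases Nat.lt_succ_iff_lt_or_eq.mp hi with hi' | rfl
    · exact hτ1 τ hτ1mem i hi' j
    -- layer i = m
    have hhyp : ∀ i' < i, ∀ j' : Fin (N.d (i' + 1)),
        (j' ∈ S i' → 0 ≤ N.pre i' j' (x + τ • z)) ∧
        (j' ∉ S i' → N.pre i' j' (x + τ • z) ≤ 0) := fun i' hi' => hτ1 τ hτ1mem i' hi'
    have hhypx : ∀ i' < i, ∀ j' : Fin (N.d (i' + 1)),
        (j' ∈ S i' → 0 ≤ N.pre i' j' x) ∧ (j' ∉ S i' → N.pre i' j' x ≤ 0) :=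
      fun i' hi' => hx i' (lt_trans hi' hmL)
    have hlin : N.pre i j (x + τ • z) = N.pre i j x + τ * g j := by
      rw [N.pre_linear S _ i hhyp j, N.pre_linear S x i hhypx j]
      have : ∀ k, N.gradW S i j k * (x + τ • z) k
          = N.gradW S i j k * x k + τ * (N.gradW S i j k * z k) := by
        intro k
        simp [Pi.add_apply, Pi.smul_apply, smul_eq_mul]
        ring
      rw [Finset.sum_congr rfl fun k _ => this k, Finset.sum_add_distrib, ← Finset.mul_sum]
      ring
    rw [hlin]
    by_cases h0 : N.pre i j x = 0
    · constructor
      · intro hj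
        rw [h0, zero_add]
        exact mul_nonneg hτ.1 (h1 i hmL j h0 hj)
      · intro hj
        rw [h0, zero_add]
        exact mul_nonpos_of_nonneg_of_nonpos hτ.1 (h2 i hmL j h0 hj)
    · have habs : τ * |g j| < |N.pre i j x| := by
        have hτF : τ ≤ |N.pre i j x| / (|g j| + 1) := by
          simpa only [hF, if_neg h0] using le_trans hτ.2 (hτ0leF j)
        calc τ * |g j| ≤ |N.pre i j x| / (|g j| + 1) * |g j| :=
              mul_le_mul_of_nonneg_right hτF (abs_nonneg _)
          _ < |N.pre i j x| := by
              rw [div_mul_eq_mul_div, div_lt_iff₀ (by positivity)]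
              have : 0 < |N.pre i j x| := abs_pos.mpr h0
              nlinarith [abs_nonneg (g j)]
      constructor
      · intro hj
        have hp : 0 < N.pre i j x := lt_of_le_of_ne ((hx i hmL j).1 hj) (Ne.symm h0)
        have : τ * g j ≥ -(τ * |g j|) := by
          have := neg_abs_le (g j)
          nlinarith [hτ.1]
        rw [abs_of_pos hp] at habs
        linarith
      · intro hj
        have hp : N.pre i j x < 0 := lt_of_le_of_ne ((hx i hmL j).2 hj) h0
        have : τ * g j ≤ τ * |g j| := by
          have := le_abs_self (g j)
          nlinarith [hτ.1]
        rw [abs_of_neg hp] at habs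
        linarith

end ReluNet

lemma key_limit {n : ℕ} (v zz x : Fin n → ℝ) (K : Set ℕ) (hK : K.Infinite)
    (τs : ℕ → ℝ) (ys : ℕ → Fin n → ℝ) (hτpos : ∀ k, 0 < τs k)
    (hdist : ∀ k, ∀ j, |x j + τs k * zz j - ys k j| ≤ τs k / (k + 1))
    (hnn : ∀ k ∈ K, 0 ≤ ∑ j, v j * (ys k j - x j)) :
    0 ≤ ∑ j, v j * zz j := by
  by_contra hc
  push_neg at hc
  set c : ℝ := -∑ j, v j * zz j with hcdef
  have hcpos : 0 < c := by simp only [hcdef]; linarith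
  set V : ℝ := ∑ j, |v j| with hV
  obtain ⟨n0, hn0⟩ := exists_nat_gt (V / c)
  obtain ⟨k, hkK, hk⟩ := hK.exists_gt n0
  have h1 : ∑ j, v j * (ys k j - x j)
      = τs k * (∑ j, v j * zz j) + ∑ j, v j * (ys k j - x j - τs k * zz j) := by
    rw [Finset.mul_sum, ← Finset.sum_add_distrib]
    exact Finset.sum_congr rfl fun j _ => by ring
  have h2 : ∑ j, v j * (ys k j - x j - τs k * zz j) ≤ V * (τs k / (k + 1)) := by
    calc ∑ j, v j * (ys k j - x j - τs k * zz j)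
        ≤ |∑ j, v j * (ys k j - x j - τs k * zz j)| := le_abs_self _
      _ ≤ ∑ j, |v j * (ys k j - x j - τs k * zz j)| := Finset.abs_sum_le_sum_abs _ _
      _ ≤ ∑ j, |v j| * (τs k / (k + 1)) := by
          refine Finset.sum_le_sum fun j _ => ?_
          rw [abs_mul]
          refine mul_le_mul_of_nonneg_left ?_ (abs_nonneg _)
          have := hdist k j
          rwa [show x j + τs k * zz j - ys k j = -(ys k j - x j - τs k * zz j) by ring,
            abs_neg] at this
      _ = V * (τs k / (k + 1)) := by rw [hV, Finset.sum_mul]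
  have h3 : 0 ≤ τs k * (-c) + V * (τs k / (k + 1)) := by
    have := hnn k hkK
    rw [h1] at this
    have hzz : (∑ j, v j * zz j) = -c := by simp [hcdef]
    nlinarith [h2]
  have hk1 : (0:ℝ) < (k:ℝ) + 1 := by positivity
  have h4 : c * ((k:ℝ) + 1) ≤ V := by
    have h5 : τs k * c ≤ V * (τs k / ((k:ℝ) + 1)) := by linarith
    have h6 : τs k * c * ((k:ℝ)+1) ≤ V * τs k := by
      have e : V * (τs k / ((k:ℝ)+1)) * ((k:ℝ)+1) = V * τs k := by field_simp
      calc τs k * c * ((k:ℝ)+1) ≤ V * (τs k / ((k:ℝ)+1)) * ((k:ℝ)+1) :=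
            mul_le_mul_of_nonneg_right h5 hk1.le
        _ = V * τs k := e
    exact le_of_mul_le_mul_right (by linarith : (c * ((k:ℝ)+1)) * τs k ≤ V * τs k) (hτpos k)
  have h7 : V / c < (k:ℝ) + 1 := by
    calc V / c < (n0 : ℝ) := hn0
      _ ≤ (k : ℝ) := by exact_mod_cast le_of_lt hk
      _ < (k:ℝ) + 1 := by linarith
  rw [div_lt_iff₀ hcpos] at h7
  nlinarith

lemma liminf_zero_of_eventually_zero {f : ℝ → ℝ}
    (h : ∀ᶠ τ in nhdsWithin (0:ℝ) (Set.Ioi 0), f τ = 0) :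
    Filter.liminf f (nhdsWithin (0:ℝ) (Set.Ioi 0)) = 0 := by
  rw [Filter.liminf_congr (show ∀ᶠ τ in nhdsWithin (0:ℝ) (Set.Ioi 0),
    f τ = (fun _ : ℝ => (0:ℝ)) τ from h)]
  exact Filter.liminf_const 0

lemma exists_small_of_liminf_zero {f : ℝ → ℝ} {E : ℝ} (hbd : ∀ τ > (0:ℝ), f τ ≤ E)
    (hlim : Filter.liminf f (nhdsWithin (0:ℝ) (Set.Ioi 0)) = 0)
    {ε δ : ℝ} (hε : 0 < ε) (hδ : 0 < δ) : ∃ τ, 0 < τ ∧ τ < δ ∧ f τ < ε := by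
  by_contra h
  push_neg at h
  have hev : ∀ᶠ τ in nhdsWithin (0:ℝ) (Set.Ioi 0), ε ≤ f τ := by
    filter_upwards [Ioo_mem_nhdsGT hδ]
      with τ hτ
    exact h τ hτ.1 hτ.2
  have hbdA : BddAbove {a : ℝ | ∀ᶠ τ in nhdsWithin (0:ℝ) (Set.Ioi 0), a ≤ f τ} := by
    refine ⟨E, fun a ha => ?_⟩
    have hevE : ∀ᶠ τ in nhdsWithin (0:ℝ) (Set.Ioi 0), f τ ≤ E := by
      filter_upwards [self_mem_nhdsWithin] with τ hτ
      exact hbd τ hτ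
    have ha' : ∀ᶠ τ in nhdsWithin (0:ℝ) (Set.Ioi 0), a ≤ f τ := ha
    obtain ⟨τ, h1, h2⟩ := (ha'.and hevE).exists
    linarith
  have : ε ≤ Filter.liminf f (nhdsWithin (0:ℝ) (Set.Ioi 0)) := by
    rw [Filter.liminf_eq]
    exact le_csSup hbdA hev
  linarith


open ReluNet in
/-- Proposition 2. For `x` on the boundary of `D = {y : b(y) ≥ 0}`,
`T_D(x) = ∪_{S ∈ S(x)} [ (∩_{(i,j) ∈ T(x), j ∈ S_i} {z : (W̄_{i-1}(S) W_{ij})·z ≥ 0}) ∩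
(∩_{(i,j) ∈ T(x), j ∉ S_i} {z : (W̄_{i-1}(S) W_{ij})·z ≤ 0}) ∩ {z : W̄(S)·z ≥ 0} ]`,
where `T(x)` is the set of neurons with zero pre-activation at `x` and `W̄_0(S) = I`.
(Paper layer `i` corresponds to index `i - 1 ∈ range L`, so `W̄_{i-1}(S) W_{ij}` is
`N.gradW S i j`.) -/
theorem stmt6 (N : ReluNet) (x : Fin (N.d 0) → ℝ)
    (hx : x ∈ frontier {y : Fin (N.d 0) → ℝ | 0 ≤ N.b y}) :
    tangentCone {y : Fin (N.d 0) → ℝ | 0 ≤ N.b y} x =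
      ⋃ S ∈ {S : N.ActSet | x ∈ N.region S},
        ((⋂ i ∈ Finset.range N.L,
            ⋂ j ∈ {j : Fin (N.d (i + 1)) | N.pre i j x = 0 ∧ j ∈ S i},
              {z : Fin (N.d 0) → ℝ | 0 ≤ ∑ k, N.gradW S i j k * z k}) ∩
         (⋂ i ∈ Finset.range N.L,
            ⋂ j ∈ {j : Fin (N.d (i + 1)) | N.pre i j x = 0 ∧ j ∉ S i},
              {z : Fin (N.d 0) → ℝ | (∑ k, N.gradW S i j k * z k) ≤ 0}) ∩
         {z : Fin (N.d 0) → ℝ | 0 ≤ ∑ k, N.WbarOut S k * z k}) := by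
  have hb0 : N.b x = 0 := b_eq_zero_of_frontier N x hx
  set D := {y : Fin (N.d 0) → ℝ | 0 ≤ N.b y} with hD
  have hxD : x ∈ D := by simp only [hD, Set.mem_setOf_eq, hb0]; exact le_refl 0
  have hDne : D.Nonempty := ⟨x, hxD⟩
  ext z
  simp only [Set.mem_iUnion, Set.mem_inter_iff, Set.mem_iInter, Set.mem_setOf_eq,
    Finset.mem_range]
  constructor
  · intro hz
    have hlim : Filter.liminf (fun τ : ℝ => eInfDist (x + τ • z) D / τ)
        (nhdsWithin 0 (Set.Ioi 0)) = 0 := hz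
    have hbd : ∀ τ > (0:ℝ), eInfDist (x + τ • z) D / τ ≤ Real.sqrt (∑ k, (z k) ^ 2) := by
      intro τ hτ
      have h1 : eInfDist (x + τ • z) D ≤ Real.sqrt (∑ k, ((x + τ • z) k - x k) ^ 2) :=
        eInfDist_le _ _ hxD
      have h2 : (∑ k, ((x + τ • z) k - x k) ^ 2) = τ ^ 2 * ∑ k, (z k) ^ 2 := by
        rw [Finset.mul_sum]
        refine Finset.sum_congr rfl fun k _ => ?_
        simp only [Pi.add_apply, Pi.smul_apply, smul_eq_mul]
        ring
      rw [h2, Real.sqrt_mul (sq_nonneg τ), Real.sqrt_sq hτ.le] at h1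
      rw [div_le_iff₀ hτ]
      nlinarith [h1]
    have hseq : ∀ k : ℕ, ∃ τ y, 0 < τ ∧ τ < 1/((k:ℝ)+1) ∧ y ∈ D ∧
        ∀ j, |x j + τ * z j - y j| ≤ τ / ((k:ℝ)+1) := by
      intro k
      have hk1 : (0:ℝ) < 1/((k:ℝ)+1) := by positivity
      obtain ⟨τ, hτpos, hτδ, hτf⟩ := exists_small_of_liminf_zero hbd hlim hk1 hk1
      have hinf : eInfDist (x + τ • z) D < τ / ((k:ℝ)+1) := by
        rw [div_lt_iff₀ hτpos] at hτf
        calc eInfDist (x + τ • z) D < 1/((k:ℝ)+1) * τ := hτf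
          _ = τ / ((k:ℝ)+1) := by ring
      obtain ⟨y, hyD, hy⟩ := eInfDist_exists_near _ _ hDne hinf
      refine ⟨τ, y, hτpos, hτδ, hyD, fun j => ?_⟩
      have hco := coord_le_sqrt (fun j => (x + τ • z) j - y j) j
      simp only [Pi.add_apply, Pi.smul_apply, smul_eq_mul] at hco hy
      exact le_of_lt (lt_of_le_of_lt hco hy)
    choose τs ys hτpos hτlt hyD hdist using hseq
    set P : ℕ → ((i : Fin N.L) → Set (Fin (N.d (i.1 + 1)))) :=
      fun k i => {j | 0 ≤ N.pre i.1 j (ys k)} with hP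
    obtain ⟨P₀, hP₀⟩ := Finite.exists_infinite_fiber P
    have hKinf : (P ⁻¹' {P₀}).Infinite := Set.infinite_coe_iff.mp hP₀
    set S : N.ActSet := (fun i => if h : i < N.L then P₀ ⟨i, h⟩ else ∅) with hS
    have hSi : ∀ k ∈ P ⁻¹' {P₀}, ∀ (i : ℕ) (hi : i < N.L),
        S i = {j : Fin (N.d (i+1)) | 0 ≤ N.pre i j (ys k)} := by
      intro k hk i hi
      have hPk : P k = P₀ := hk
      simp only [hS]
      rw [dif_pos hi, ← hPk]
    have hyreg : ∀ k ∈ P ⁻¹' {P₀}, ys k ∈ N.region S := by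
      intro k hk i hi j
      rw [hSi k hk i hi]
      exact ⟨fun h => h, fun h => le_of_not_ge h⟩
    have hxreg : x ∈ N.region S := by
      rw [← (N.isClosed_region S).closure_eq, Metric.mem_closure_iff]
      intro ε hε
      have hCpos : (0:ℝ) < 1 + ∑ j, |z j| := by positivity
      obtain ⟨n0, hn0⟩ := exists_nat_gt ((1 + ∑ j, |z j|) / ε)
      obtain ⟨k, hkK, hkn⟩ := hKinf.exists_gt n0
      refine ⟨ys k, hyreg k hkK, ?_⟩
      rw [dist_pi_lt_iff hε]
      intro j
      rw [Real.dist_eq]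
      have hk1 : (0:ℝ) < (k:ℝ) + 1 := by positivity
      have habs : |x j - ys k j| ≤ |x j + τs k * z j - ys k j| + |τs k * z j| := by
        have h := abs_add_le (x j + τs k * z j - ys k j) (-(τs k * z j))
        rw [abs_neg] at h
        calc |x j - ys k j| = |(x j + τs k * z j - ys k j) + -(τs k * z j)| := by
              congr 1; ring
          _ ≤ _ := h
      have hzj : |z j| ≤ ∑ j', |z j'| :=
        Finset.single_le_sum (fun j' _ => abs_nonneg (z j')) (Finset.mem_univ j)
      have hτk := hτpos k
      have hτklt := hτlt k
      have hfrac : τs k / ((k:ℝ)+1) ≤ τs k := by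
        rw [div_le_iff₀ hk1]; nlinarith
      have hbound : |x j - ys k j| ≤ τs k * (1 + ∑ j', |z j'|) := by
        rw [abs_mul, abs_of_pos hτk] at habs
        have hd := hdist k j
        have : τs k * |z j| ≤ τs k * (∑ j', |z j'|) :=
          mul_le_mul_of_nonneg_left hzj hτk.le
        calc |x j - ys k j| ≤ |x j + τs k * z j - ys k j| + τs k * |z j| := habs
          _ ≤ τs k / ((k:ℝ)+1) + τs k * |z j| := by linarith
          _ ≤ τs k + τs k * (∑ j', |z j'|) := by linarith
          _ = τs k * (1 + ∑ j', |z j'|) := by ring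
      have hfin : τs k * (1 + ∑ j', |z j'|) < ε := by
        have hn : (1 + ∑ j', |z j'|) / ε < (k:ℝ) + 1 := by
          calc (1 + ∑ j', |z j'|) / ε < (n0:ℝ) := hn0
            _ ≤ (k:ℝ) := by exact_mod_cast hkn.le
            _ < (k:ℝ)+1 := by linarith
        rw [div_lt_iff₀ hε] at hn
        calc τs k * (1 + ∑ j', |z j'|) < (1/((k:ℝ)+1)) * (1 + ∑ j', |z j'|) := by nlinarith
          _ = (1 + ∑ j', |z j'|) / ((k:ℝ)+1) := by ring
          _ < ε := by rw [div_lt_iff₀ hk1]; linarith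
      exact lt_of_le_of_lt hbound hfin
    refine ⟨S, hxreg, ⟨⟨?_, ?_⟩, ?_⟩⟩
    · rintro i hi j ⟨hpre0, hjS⟩
      refine key_limit (N.gradW S i j) z x _ hKinf τs ys hτpos hdist ?_
      intro k hk
      have hregs := hyreg k hk
      have hlinx := N.pre_linear S x i (fun i' hi' j' => hxreg i' (lt_trans hi' hi) j') j
      have hliny := N.pre_linear S (ys k) i (fun i' hi' j' => hregs i' (lt_trans hi' hi) j') j
      have hy0 : 0 ≤ N.pre i j (ys k) := (hregs i hi j).1 hjS
      have e1 : ∑ k', N.gradW S i j k' * (ys k k' - x k')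
          = (∑ k', N.gradW S i j k' * ys k k') - (∑ k', N.gradW S i j k' * x k') := by
        rw [← Finset.sum_sub_distrib]
        exact Finset.sum_congr rfl fun k' _ => by ring
      rw [e1]
      linarith
    · rintro i hi j ⟨hpre0, hjS⟩
      have hnn : ∀ k ∈ P ⁻¹' {P₀}, 0 ≤ ∑ k', (fun k' => -(N.gradW S i j k')) k' * (ys k k' - x k') := by
        intro k hk
        have hregs := hyreg k hk
        have hlinx := N.pre_linear S x i (fun i' hi' j' => hxreg i' (lt_trans hi' hi) j') j
        have hliny := N.pre_linear S (ys k) i (fun i' hi' j' => hregs i' (lt_trans hi' hi) j') j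
        have hy0 : N.pre i j (ys k) ≤ 0 := (hregs i hi j).2 hjS
        have e1 : ∑ k', (fun k' => -(N.gradW S i j k')) k' * (ys k k' - x k')
            = (∑ k', N.gradW S i j k' * x k') - (∑ k', N.gradW S i j k' * ys k k') := by
          rw [← Finset.sum_sub_distrib]
          exact Finset.sum_congr rfl fun k' _ => by simp; ring
        rw [e1]
        linarith
      have hkey := key_limit (fun k' => -(N.gradW S i j k')) z x _ hKinf τs ys hτpos hdist hnn
      simp only [neg_mul] at hkey
      rw [Finset.sum_neg_distrib] at hkey
      linarith
    · refine key_limit (N.WbarOut S) z x _ hKinf τs ys hτpos hdist ?_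
      intro k hk
      have hregs := hyreg k hk
      have hby := N.b_linear S (ys k) hregs
      have hbx := N.b_linear S x hxreg
      have hy0 : 0 ≤ N.b (ys k) := hyD k
      have e1 : ∑ k', N.WbarOut S k' * (ys k k' - x k')
          = (∑ k', N.WbarOut S k' * ys k k') - (∑ k', N.WbarOut S k' * x k') := by
        rw [← Finset.sum_sub_distrib]
        exact Finset.sum_congr rfl fun k' _ => by ring
      rw [e1]
      linarith
  · rintro ⟨S, hxS, ⟨hA, hB⟩, hC⟩
    obtain ⟨τ0, hτ0pos, hmem⟩ := N.ray S x z hxS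
      (fun i hi j h0 hjS => hA i hi j ⟨h0, hjS⟩)
      (fun i hi j h0 hjS => hB i hi j ⟨h0, hjS⟩) N.L le_rfl
    show Filter.liminf _ _ = 0
    apply liminf_zero_of_eventually_zero
    filter_upwards [Ioo_mem_nhdsGT hτ0pos]
      with τ hτ
    have hmemτ : x + τ • z ∈ N.region S := hmem τ ⟨hτ.1.le, hτ.2.le⟩
    have hsum : (∑ k, N.WbarOut S k * (x + τ • z) k)
        = (∑ k, N.WbarOut S k * x k) + τ * ∑ k, N.WbarOut S k * z k := by
      rw [Finset.mul_sum, ← Finset.sum_add_distrib]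
      refine Finset.sum_congr rfl fun k _ => ?_
      simp only [Pi.add_apply, Pi.smul_apply, smul_eq_mul]
      ring
    have hbτ : 0 ≤ N.b (x + τ • z) := by
      rw [N.b_linear S _ hmemτ, hsum]
      have hbx := N.b_linear S x hxS
      have : (∑ k, N.WbarOut S k * x k) + N.rbarOut S = 0 := by rw [← hbx]; exact hb0
      have hτz : 0 ≤ τ * ∑ k, N.WbarOut S k * z k := mul_nonneg hτ.1.le hC
      linarith
    have hmemD : x + τ • z ∈ D := hbτ
    rw [eInfDist_eq_zero_of_mem _ _ hmemD, zero_div]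
end

section
/- There is no function x = (x_1, x_2) : [0, ∞) → ℝ^2 such that x_2 is differentiable with x_2'(t) = −x_1(t) + 5·x_2(t) for all t ≥ 0, x_2(0) > 1/5, and |x_1(t)| + |x_2(t)| ≤ 1 for all t ≥ 0. -/
/-- counterexample of Section 3.2. There is no trajectory
`x = (x₁, x₂) : [0,∞) → ℝ²` with `x₂` differentiable satisfying
`x₂'(t) = -x₁(t) + 5·x₂(t)` for all `t ≥ 0`, `x₂(0) > 1/5`, and
`|x₁(t)| + |x₂(t)| ≤ 1` for all `t ≥ 0`. -/
theorem stmt14 :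
    ¬ ∃ x₁ x₂ : ℝ → ℝ,
        (∀ t : ℝ, 0 ≤ t → HasDerivWithinAt x₂ (-x₁ t + 5 * x₂ t) (Set.Ici 0) t) ∧
        1 / 5 < x₂ 0 ∧
        (∀ t : ℝ, 0 ≤ t → |x₁ t| + |x₂ t| ≤ 1) := by
  rintro ⟨x₁, x₂, hderiv, h0, hbound⟩
  set g : ℝ → ℝ := fun t => (x₂ t - 1 / 5) * Real.exp (-(5 * t)) with hg
  have hx₁le : ∀ t : ℝ, 0 ≤ t → x₁ t ≤ 1 := fun t ht =>
    (le_abs_self _).trans (le_trans (le_add_of_nonneg_right (abs_nonneg _)) (hbound t ht))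
  have hx₂le : ∀ t : ℝ, 0 ≤ t → x₂ t ≤ 1 := fun t ht =>
    (le_abs_self _).trans (le_trans (le_add_of_nonneg_left (abs_nonneg _)) (hbound t ht))
  have hgderiv : ∀ t ∈ Set.Ici (0:ℝ),
      HasDerivWithinAt g ((1 - x₁ t) * Real.exp (-(5 * t))) (Set.Ici 0) t := by
    intro t ht
    have hexp : HasDerivAt (fun s : ℝ => Real.exp (-(5 * s)))
        (Real.exp (-(5 * t)) * (-5)) t := by
      have := (((hasDerivAt_id t).const_mul (5:ℝ)).neg).exp
      simpa using this
    have h := ((hderiv t ht).sub_const (1/5)).mul (hexp.hasDerivWithinAt)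
    exact h.congr_deriv (by ring)
  have hmono : MonotoneOn g (Set.Ici 0) := by
    apply monotoneOn_of_hasDerivWithinAt_nonneg (convex_Ici 0)
      (fun t ht => (hgderiv t ht).continuousWithinAt)
      (f' := fun t => (1 - x₁ t) * Real.exp (-(5 * t)))
    · intro t ht
      rw [interior_Ici] at *
      exact (hgderiv t (Set.mem_Ici.mpr (le_of_lt (Set.mem_Ioi.mp ht)))).mono Set.Ioi_subset_Ici_self
    · intro t ht
      rw [interior_Ici] at ht
      exact mul_nonneg (by linarith [hx₁le t (le_of_lt ht)]) (Real.exp_pos _).le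
  set c : ℝ := x₂ 0 - 1 / 5 with hc
  have hcpos : 0 < c := by simp [hc]; linarith
  set t : ℝ := 1 / c with htdef
  have htpos : 0 < t := by positivity
  have hle : g 0 ≤ g t := hmono (Set.mem_Ici.mpr le_rfl) (le_of_lt htpos) htpos.le
  have hg0 : g 0 = c := by simp [hg, hc]
  have hgt : g t ≤ (4 / 5) * Real.exp (-(5 * t)) := by
    have := hx₂le t htpos.le
    have hexp := (Real.exp_pos (-(5 * t))).le
    simp only [hg]
    nlinarith
  -- so c * exp (5 t) ≤ 4/5, but exp (5 t) ≥ 1 + 5 t so c * exp (5t) ≥ c + 5 > 4/5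
  have hkey : c * Real.exp (5 * t) ≤ 4 / 5 := by
    have h := hle.trans hgt
    rw [hg0] at h
    have : Real.exp (-(5 * t)) = (Real.exp (5 * t))⁻¹ := by
      rw [Real.exp_neg]
    rw [this] at h
    have hpos := Real.exp_pos (5 * t)
    calc c * Real.exp (5 * t) ≤ (4 / 5 * (Real.exp (5 * t))⁻¹) * Real.exp (5 * t) := by
          apply mul_le_mul_of_nonneg_right h hpos.le
      _ = 4 / 5 := by field_simp
  have hexpge : 1 + 5 * t ≤ Real.exp (5 * t) := by linarith [Real.add_one_le_exp (5 * t)]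
  have : c * (1 + 5 * t) ≤ 4 / 5 := le_trans (mul_le_mul_of_nonneg_left hexpge hcpos.le) hkey
  have hct : c * t = 1 := by rw [htdef, mul_one_div_cancel hcpos.ne']
  have h5 : c * (1 + 5 * t) = c + 5 := by
    have h' : c * (5 * t) = 5 := by
      rw [show c * (5 * t) = 5 * (c * t) by ring, hct]; ring
    calc c * (1 + 5 * t) = c + c * (5 * t) := by ring
      _ = c + 5 := by rw [h']
  rw [h5] at this
  linarith [this, hcpos]
end
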